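/- arXiv:2110.07881 — 6 statements merged into one kernel-verified Lean document; each statement's English description precedes it below -/
import Mathlib

section
/- Madow's systematic sampling scheme is correct: given a vector p ∈ [0,1]^N with ∑_i p_i = k, define Π_0 = 0 and Π_j = Π_{j-1} + p_j; draw U uniform on [0,1] and select element j if there exists an integer i with 0 ≤ i ≤ k-1 such that Π_{j-1} ≤ U + i < Π_j. Then the selected set S has exactly k elements, and P(j ∈ S) = p_j for every j ∈ {1,...,N}. -/
open MeasureTheory

/-- The set selected by Madow's systematic sampling scheme given the uniform draw `U`:
with cumulative sums `Π j = ∑_{l < j} p l`, element `j` (0-indexed) is selected iff there is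
an integer `0 ≤ i < k` with `Π j ≤ U + i < Π (j+1)`. -/
noncomputable def madowSet (N k : ℕ) (p : ℕ → ℝ) (U : ℝ) : Finset ℕ :=
  (Finset.range N).filter
    (fun j => ∃ i < k, (∑ l ∈ Finset.range j, p l) ≤ U + i ∧
        U + i < ∑ l ∈ Finset.range (j + 1), p l)

lemma madow_measure (k : ℕ) (a b : ℝ) (ha0 : 0 ≤ a) (_hab : a ≤ b) (hb1 : b ≤ a + 1)
    (hbk : b ≤ (k : ℝ)) :
    volume (⋃ i ∈ Finset.range k, Set.Ico (max a (i : ℝ) - i) (min b ((i : ℝ) + 1) - i))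
      = ENNReal.ofReal (b - a) := by
  have key : ∀ i i' : ℕ, i < i' →
      Disjoint (Set.Ico (max a (i : ℝ) - i) (min b ((i : ℝ) + 1) - i))
        (Set.Ico (max a (i' : ℝ) - i') (min b ((i' : ℝ) + 1) - i')) := by
    intro i i' hlt
    rw [Set.disjoint_left]
    rintro x ⟨h1, h2⟩ ⟨h3, h4⟩
    have hi : (i : ℝ) + 1 ≤ i' := by exact_mod_cast hlt
    have l1 : a ≤ x + i := by have := le_max_left a (i : ℝ); linarith
    have l2 : x + i' < b := by have := min_le_left b ((i' : ℝ) + 1); linarith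
    linarith
  have hdisj : (↑(Finset.range k) : Set ℕ).Pairwise
      (Function.onFun Disjoint fun i => Set.Ico (max a (i : ℝ) - i) (min b ((i : ℝ) + 1) - i)) := by
    intro i _ i' _ hne
    rcases lt_or_gt_of_ne hne with h | h
    · exact key i i' h
    · exact (key i' i h).symm
  rw [measure_biUnion_finset hdisj (fun i _ => measurableSet_Ico)]
  have heq : ∀ i ∈ Finset.range k,
      volume (Set.Ico (max a (i : ℝ) - i) (min b ((i : ℝ) + 1) - i))
        = volume (Set.Ico a b ∩ Set.Ico (i : ℝ) ((i : ℝ) + 1)) := by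
    intro i _
    rw [Set.Ico_inter_Ico, Real.volume_Ico, Real.volume_Ico]
    congr 1; ring
  rw [Finset.sum_congr rfl heq]
  have hdisj2 : (↑(Finset.range k) : Set ℕ).Pairwise
      (Function.onFun Disjoint fun i => Set.Ico a b ∩ Set.Ico (i : ℝ) ((i : ℝ) + 1)) := by
    have key2 : ∀ i i' : ℕ, i < i' →
        Disjoint (Set.Ico a b ∩ Set.Ico (i : ℝ) ((i : ℝ) + 1))
          (Set.Ico a b ∩ Set.Ico (i' : ℝ) ((i' : ℝ) + 1)) := by
      intro i i' hlt
      rw [Set.disjoint_left]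
      rintro x ⟨_, h1, h2⟩ ⟨_, h3, h4⟩
      have hi : (i : ℝ) + 1 ≤ i' := by exact_mod_cast hlt
      linarith
    intro i _ i' _ hne
    rcases lt_or_gt_of_ne hne with h | h
    · exact key2 i i' h
    · exact (key2 i' i h).symm
  rw [← measure_biUnion_finset hdisj2 (fun i _ => (measurableSet_Ico.inter measurableSet_Ico))]
  have hU : (⋃ i ∈ Finset.range k, Set.Ico a b ∩ Set.Ico (i : ℝ) ((i : ℝ) + 1)) = Set.Ico a b := by
    ext x
    simp only [Set.mem_iUnion, Finset.mem_range, Set.mem_inter_iff, Set.mem_Ico, exists_prop]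
    constructor
    · rintro ⟨i, _, hx, _⟩; exact hx
    · intro hx
      have hx0 : 0 ≤ x := le_trans ha0 hx.1
      refine ⟨⌊x⌋₊, ?_, hx, ?_, ?_⟩
      · exact (Nat.floor_lt hx0).2 (lt_of_lt_of_le hx.2 hbk)
      · exact Nat.floor_le hx0
      · exact Nat.lt_floor_add_one x
  rw [hU, Real.volume_Ico]

/-- Correctness of Madow's sampling scheme: if `p ∈ [0,1]^N` with
`∑_{i<N} p i = k`, then for every `U ∈ [0,1)` the selected set has exactly `k` elements,
and when `U` is uniform on `[0,1]` the probability that `j` is selected equals `p j`. -/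
theorem stmt_1 (N k : ℕ) (hk : 1 ≤ k) (hkN : k ≤ N) (p : ℕ → ℝ)
    (hp : ∀ i < N, 0 ≤ p i ∧ p i ≤ 1)
    (hsum : ∑ i ∈ Finset.range N, p i = k) :
    (∀ U ∈ Set.Ico (0 : ℝ) 1, (madowSet N k p U).card = k) ∧
      (∀ j < N,
        volume {U ∈ Set.Ico (0 : ℝ) 1 | j ∈ madowSet N k p U} = ENNReal.ofReal (p j)) := by
  classical
  have hmono : ∀ m n, m ≤ n → n ≤ N →
      (∑ l ∈ Finset.range m, p l) ≤ ∑ l ∈ Finset.range n, p l := by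
    intro m n hmn hnN
    apply Finset.sum_le_sum_of_subset_of_nonneg (Finset.range_subset_range.2 hmn)
    intro l hl _
    exact (hp l (lt_of_lt_of_le (Finset.mem_range.1 hl) hnN)).1
  have hstep : ∀ j, (∑ l ∈ Finset.range (j + 1), p l) = (∑ l ∈ Finset.range j, p l) + p j :=
    fun j => Finset.sum_range_succ p j
  constructor
  · -- cardinality
    intro U hU
    obtain ⟨hU0, hU1⟩ := hU
    set J : ℕ → ℕ := fun i =>
      Nat.findGreatest (fun j => (∑ l ∈ Finset.range j, p l) ≤ U + i) (N - 1) with hJ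
    have hJle' : ∀ i : ℕ, J i ≤ N - 1 := fun i => Nat.findGreatest_le _
    have hJlt : ∀ i : ℕ, J i < N := by intro i; have := hJle' i; omega
    have hJle : ∀ i : ℕ, (∑ l ∈ Finset.range (J i), p l) ≤ U + i := by
      intro i
      exact Nat.findGreatest_spec
        (P := fun j => (∑ l ∈ Finset.range j, p l) ≤ U + (i : ℝ)) (Nat.zero_le _)
        (by simpa using add_nonneg hU0 (Nat.cast_nonneg i))
    have hJsucc : ∀ i < k, U + i < ∑ l ∈ Finset.range (J i + 1), p l := by
      intro i hik
      by_contra h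
      push_neg at h
      rcases le_or_gt (J i + 1) (N - 1) with hle | hlt
      · have h5 : J i + 1 ≤ J i :=
          Nat.le_findGreatest
            (P := fun j => (∑ l ∈ Finset.range j, p l) ≤ U + (i : ℝ)) hle h
        omega
      · have hJN : J i + 1 = N := by have := hJle' i; omega
        rw [hJN, hsum] at h
        have hik' : (i : ℝ) + 1 ≤ k := by exact_mod_cast hik
        linarith
    have huniq : ∀ i < k, ∀ j, j < N → (∑ l ∈ Finset.range j, p l) ≤ U + i →
        U + i < (∑ l ∈ Finset.range (j + 1), p l) → j = J i := by
      intro i hik j hjN h1 h2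
      rcases lt_trichotomy j (J i) with h | h | h
      · exfalso
        have hle : (∑ l ∈ Finset.range (j + 1), p l) ≤ ∑ l ∈ Finset.range (J i), p l :=
          hmono _ _ h (hJlt i).le
        have := hJle i
        linarith
      · exact h
      · exfalso
        have hle : (∑ l ∈ Finset.range (J i + 1), p l) ≤ ∑ l ∈ Finset.range j, p l :=
          hmono _ _ h hjN.le
        have := hJsucc i hik
        linarith
    have himg : madowSet N k p U = (Finset.range k).image J := by
      ext j
      simp only [madowSet, Finset.mem_filter, Finset.mem_range, Finset.mem_image]
      constructor
      · rintro ⟨hjN, i, hik, h1, h2⟩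
        exact ⟨i, hik, (huniq i hik j hjN h1 h2).symm⟩
      · rintro ⟨i, hik, rfl⟩
        exact ⟨hJlt i, i, hik, hJle i, hJsucc i hik⟩
    rw [himg, Finset.card_image_of_injOn, Finset.card_range]
    have hinj : ∀ i < k, ∀ i' < k, i < i' → J i ≠ J i' := by
      intro i hik i' hik' hlt heq
      have h1 := hJle i
      have h2 := hJsucc i' hik'
      rw [← heq] at h2
      have h3 := hstep (J i)
      rw [h3] at h2
      have hpJ : p (J i) ≤ 1 := (hp (J i) (hJlt i)).2
      have hi : (i : ℝ) + 1 ≤ i' := by exact_mod_cast hlt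
      linarith
    intro i hi i' hi' heq
    by_contra hne
    rcases lt_or_gt_of_ne hne with h | h
    · exact hinj i (Finset.mem_range.1 hi) i' (Finset.mem_range.1 hi') h heq
    · exact hinj i' (Finset.mem_range.1 hi') i (Finset.mem_range.1 hi) h heq.symm
  · -- measure
    intro j hj
    have hpj := hp j hj
    have ha0 : 0 ≤ ∑ l ∈ Finset.range j, p l := by
      have := hmono 0 j (Nat.zero_le _) hj.le
      simpa using this
    have hab : (∑ l ∈ Finset.range j, p l) ≤ ∑ l ∈ Finset.range (j + 1), p l := by
      rw [hstep]; linarith [hpj.1]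
    have hb1 : (∑ l ∈ Finset.range (j + 1), p l) ≤ (∑ l ∈ Finset.range j, p l) + 1 := by
      rw [hstep]; linarith [hpj.2]
    have hbk : (∑ l ∈ Finset.range (j + 1), p l) ≤ (k : ℝ) := by
      rw [← hsum]; exact hmono (j + 1) N (by omega) le_rfl
    have hset : {U ∈ Set.Ico (0 : ℝ) 1 | j ∈ madowSet N k p U}
        = ⋃ i ∈ Finset.range k,
            Set.Ico (max (∑ l ∈ Finset.range j, p l) (i : ℝ) - i)
              (min (∑ l ∈ Finset.range (j + 1), p l) ((i : ℝ) + 1) - i) := by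
      ext U
      simp only [Set.mem_setOf_eq, Set.mem_Ico, madowSet, Finset.mem_filter,
        Finset.mem_range, Set.mem_iUnion, exists_prop]
      constructor
      · rintro ⟨⟨hU0, hU1⟩, _, i, hik, h1, h2⟩
        refine ⟨i, hik, ?_, ?_⟩
        · rw [sub_le_iff_le_add, max_le_iff]
          exact ⟨h1, by linarith⟩
        · rw [lt_sub_iff_add_lt, lt_min_iff]
          exact ⟨h2, by linarith⟩
      · rintro ⟨i, hik, h1, h2⟩
        rw [sub_le_iff_le_add, max_le_iff] at h1
        rw [lt_sub_iff_add_lt, lt_min_iff] at h2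
        exact ⟨⟨by linarith [h1.2], by linarith [h2.2]⟩, hj, i, hik, h1.1, h2.1⟩
    rw [hset, madow_measure k _ _ ha0 hab hb1 hbk, hstep]
    ring_nf
end

section
/- Given a stable loss function φ: [N]^T → [0,1] with E φ(z) ≥ 1 - k/N under the i.i.d. uniform measure on [N]^T, the vector defined by p_{t,i}(y^{t-1}) = T(φ_{t-1}(y^{t-1}) - φ_t(y^{t-1} i)) + k/N, where φ_t(y^t) = E φ(y^t, ε_{t+1}^T) for ε i.i.d. uniform on [N], satisfies ∑_{i=1}^N p_{t,i}(y^{t-1}) = k and 0 ≤ p_{t,i}(y^{t-1}) ≤ 1 for all i, t, and prefixes y^{t-1}. -/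
open scoped Classical

open Finset

lemma card_lt_filter (T m : ℕ) (hm : m ≤ T) :
    (Finset.univ.filter (fun s : Fin T => (s : ℕ) < m)).card = m := by
  have h : (Finset.univ.filter (fun s : Fin T => (s : ℕ) < m)).card
      = (Finset.range m).card := by
    refine Finset.card_bij (fun (a : Fin T) _ => (a : ℕ)) ?_ ?_ ?_
    · intro s hs; simp only [Finset.mem_filter] at hs; simp [hs.2]
    · intro a _ b _ h; exact Fin.ext h
    · intro j hj
      simp only [Finset.mem_range] at hj
      exact ⟨⟨j, lt_of_lt_of_le hj hm⟩, by simp [hj], rfl⟩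
  simpa using h

lemma card_agree (N T m : ℕ) (hm : m ≤ T) (w : Fin T → Fin N) :
    (Finset.univ.filter (fun z : Fin T → Fin N =>
        ∀ s : Fin T, (s : ℕ) < m → z s = w s)).card = N ^ (T - m) := by
  have hset : (Finset.univ.filter (fun z : Fin T → Fin N =>
        ∀ s : Fin T, (s : ℕ) < m → z s = w s))
      = Fintype.piFinset (fun s : Fin T =>
          if (s : ℕ) < m then {w s} else Finset.univ) := by
    ext z
    simp only [Finset.mem_filter, Finset.mem_univ, true_and, Fintype.mem_piFinset]
    constructor
    · intro h s
      by_cases hs : (s : ℕ) < m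
      · simp [hs, h s hs]
      · simp [hs]
    · intro h s hs
      have := h s
      simpa [hs] using this
  rw [hset, Fintype.card_piFinset]
  have hcc : ∀ s : Fin T, ((if (s : ℕ) < m then ({w s} : Finset (Fin N)) else Finset.univ)).card
      = if (s : ℕ) < m then 1 else N := by
    intro s; split <;> simp
  rw [Finset.prod_congr rfl (fun s _ => hcc s)]
  rw [Finset.prod_ite]
  simp only [Finset.prod_const_one, Finset.prod_const, one_mul]
  congr 1
  rw [Finset.filter_not, Finset.card_sdiff_of_subset (Finset.filter_subset _ _),
    Finset.card_univ, Fintype.card_fin, card_lt_filter T m hm]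


/-- The potential function `φ_m`: the conditional expectation of `φ` given the first `m`
coordinates of `y`, averaging the remaining `T - m` coordinates i.i.d. uniformly over `[N]`:
`φ_m(y) = (1/N^{T-m}) ∑_{z : z_s = y_s ∀ s < m} φ(z)`. -/
noncomputable def phiCond (N T : ℕ) (φ : (Fin T → Fin N) → ℝ) (m : ℕ)
    (y : Fin T → Fin N) : ℝ :=
  (1 / (N : ℝ) ^ (T - m)) *
    ∑ z : Fin T → Fin N, if ∀ s : Fin T, (s : ℕ) < m → z s = y s then φ z else 0

/-- Given a stable loss function `φ : [N]^T → [0,1]` with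
`E φ(z) ≥ 1 - k/N` under the i.i.d. uniform measure, the vector
`p_{t,i}(y^{t-1}) = T (φ_{t-1}(y^{t-1}) - φ_t(y^{t-1} i)) + k/N` satisfies
`∑ i, p_{t,i} = k` and `0 ≤ p_{t,i} ≤ 1` for all rounds `t` and prefixes. -/
theorem stmt_3 (N T k : ℕ) (hk : 1 ≤ k) (hkN : k ≤ N) (hT : 1 ≤ T)
    (φ : (Fin T → Fin N) → ℝ)
    (hrange : ∀ y, 0 ≤ φ y ∧ φ y ≤ 1)
    (hstab1 : ∀ (y : Fin T → Fin N) (t : Fin T) (i : Fin N),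
      φ (Function.update y t i) - (1 / (N : ℝ)) * ∑ j : Fin N, φ (Function.update y t j)
        ≤ k / ((N : ℝ) * T))
    (hstab2 : ∀ (y : Fin T → Fin N) (t : Fin T) (i : Fin N),
      (1 / (N : ℝ)) * (∑ j : Fin N, φ (Function.update y t j)) - φ (Function.update y t i)
        ≤ (1 - (k : ℝ) / N) / T)
    (hmean : (1 / (N : ℝ) ^ T) * ∑ z : Fin T → Fin N, φ z ≥ 1 - (k : ℝ) / N)
    (p : Fin T → Fin N → (Fin T → Fin N) → ℝ)
    (hp : ∀ (t : Fin T) (i : Fin N) (y : Fin T → Fin N),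
      p t i y = T * (phiCond N T φ t y - phiCond N T φ (t + 1) (Function.update y t i))
          + (k : ℝ) / N) :
    ∀ (t : Fin T) (y : Fin T → Fin N),
      (∑ i : Fin N, p t i y) = k ∧ ∀ i : Fin N, 0 ≤ p t i y ∧ p t i y ≤ 1 := by
  intro t y
  have hN0 : 0 < N := Nat.lt_of_lt_of_le hk hkN
  have hNR : (0 : ℝ) < N := by exact_mod_cast hN0
  have hTR : (0 : ℝ) < T := by exact_mod_cast hT
  have hmT : (t : ℕ) < T := t.isLt
  classical
  set B : Finset (Fin T → Fin N) :=
    Finset.univ.filter (fun z => ∀ s : Fin T, (s : ℕ) < (t : ℕ) → z s = y s) with hB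
  set A : Fin N → Finset (Fin T → Fin N) :=
    fun i => B.filter (fun z => z t = i) with hA
  -- the filter for prefix length t+1 after updating coordinate t to i is exactly `A i`
  have hQA : ∀ i : Fin N, Finset.univ.filter (fun z : Fin T → Fin N =>
      ∀ s : Fin T, (s : ℕ) < (t : ℕ) + 1 → z s = Function.update y t i s) = A i := by
    intro i
    ext z
    simp only [hA, hB, Finset.mem_filter, Finset.mem_univ, true_and]
    constructor
    · intro h
      refine ⟨fun s hs => ?_, ?_⟩
      · have hne : s ≠ t := Fin.ne_of_val_ne (Nat.ne_of_lt hs)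
        have := h s (by omega)
        rwa [Function.update_of_ne hne] at this
      · have := h t (by omega)
        rwa [Function.update_self] at this
    · rintro ⟨h1, h2⟩ s hs
      by_cases hst : s = t
      · subst hst; rw [Function.update_self]; exact h2
      · rw [Function.update_of_ne hst]
        apply h1
        have hne : (s : ℕ) ≠ (t : ℕ) := fun e => hst (Fin.ext e)
        omega
  have hPhiB : phiCond N T φ (t : ℕ) y = (1 / (N : ℝ) ^ (T - (t : ℕ))) * ∑ z ∈ B, φ z := by
    rw [phiCond, hB, Finset.sum_filter]
  have hPhiA : ∀ i : Fin N, phiCond N T φ ((t : ℕ) + 1) (Function.update y t i)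
      = (1 / (N : ℝ) ^ (T - ((t : ℕ) + 1))) * ∑ z ∈ A i, φ z := by
    intro i
    rw [phiCond, ← hQA i, Finset.sum_filter]
  have hcardA : ∀ i : Fin N, (A i).card = N ^ (T - ((t : ℕ) + 1)) := by
    intro i
    rw [← hQA i]
    exact card_agree N T ((t : ℕ) + 1) (by omega) _
  have hfib : ∑ i : Fin N, ∑ z ∈ A i, φ z = ∑ z ∈ B, φ z := by
    simpa [hA] using Finset.sum_fiberwise B (fun z => z t) φ
  -- bijection between fibers
  have hbij : ∀ i j : Fin N, ∑ z ∈ A i, φ (Function.update z t j) = ∑ z ∈ A j, φ z := by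
    intro i j
    refine Finset.sum_nbij' (fun z => Function.update z t j) (fun z => Function.update z t i)
      ?_ ?_ ?_ ?_ ?_
    · intro z hz
      simp only [hA, hB, Finset.mem_filter, Finset.mem_univ, true_and] at hz ⊢
      refine ⟨fun s hs => ?_, Function.update_self _ _ _⟩
      have hne : s ≠ t := Fin.ne_of_val_ne (Nat.ne_of_lt hs)
      rw [Function.update_of_ne hne]
      exact hz.1 s hs
    · intro z hz
      simp only [hA, hB, Finset.mem_filter, Finset.mem_univ, true_and] at hz ⊢
      refine ⟨fun s hs => ?_, Function.update_self _ _ _⟩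
      have hne : s ≠ t := Fin.ne_of_val_ne (Nat.ne_of_lt hs)
      rw [Function.update_of_ne hne]
      exact hz.1 s hs
    · intro z hz
      simp only [hA, hB, Finset.mem_filter, Finset.mem_univ, true_and] at hz
      show Function.update (Function.update z t j) t i = z
      rw [Function.update_idem, ← hz.2, Function.update_eq_self]
    · intro z hz
      simp only [hA, hB, Finset.mem_filter, Finset.mem_univ, true_and] at hz
      show Function.update (Function.update z t i) t j = z
      rw [Function.update_idem, ← hz.2, Function.update_eq_self]
    · intro z _; rfl
  have hBi : ∀ i : Fin N, ∑ z ∈ B, φ z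
      = ∑ z ∈ A i, (∑ j : Fin N, φ (Function.update z t j)) := by
    intro i
    rw [Finset.sum_comm, ← hfib]
    exact (Finset.sum_congr rfl (fun j _ => (hbij i j).symm))
  set D : Fin N → ℝ := fun i =>
    ∑ z ∈ A i, ((1 / (N : ℝ)) * (∑ j : Fin N, φ (Function.update z t j)) - φ z) with hDdef
  have hD : ∀ i : Fin N, D i = (1 / (N : ℝ)) * (∑ z ∈ B, φ z) - ∑ z ∈ A i, φ z := by
    intro i
    show ∑ z ∈ A i, ((1 / (N : ℝ)) * (∑ j : Fin N, φ (Function.update z t j)) - φ z)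
        = (1 / (N : ℝ)) * (∑ z ∈ B, φ z) - ∑ z ∈ A i, φ z
    rw [Finset.sum_sub_distrib, ← Finset.mul_sum, ← hBi i]
  set c : ℝ := (N : ℝ) ^ (T - ((t : ℕ) + 1)) with hcdef
  have hc : (0 : ℝ) < c := pow_pos hNR _
  have hcardR : ∀ i : Fin N, ((A i).card : ℝ) = c := by
    intro i; rw [hcardA i]; push_cast; rfl
  have hNc : (N : ℝ) ^ (T - (t : ℕ)) = c * N := by
    rw [hcdef, ← pow_succ]
    congr 1
    omega
  -- expression of p in terms of D
  have hpexpr : ∀ i : Fin N, p t i y = T * (D i / c) + (k : ℝ) / N := by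
    intro i
    rw [hp t i y, hPhiB, hPhiA i, hD i, hNc]
    field_simp
  -- bounds on D
  have hub : ∀ i : Fin N, D i ≤ c * ((1 - (k : ℝ) / N) / T) := by
    intro i
    calc D i ≤ ∑ _z ∈ A i, ((1 - (k : ℝ) / N) / T) := by
          apply Finset.sum_le_sum
          intro z hz
          simp only [hA, hB, Finset.mem_filter, Finset.mem_univ, true_and] at hz
          have h := hstab2 z t i
          rwa [show Function.update z t i = z from by rw [← hz.2, Function.update_eq_self]] at h
      _ = c * ((1 - (k : ℝ) / N) / T) := by
          rw [Finset.sum_const, nsmul_eq_mul, hcardR i]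
  have hlb : ∀ i : Fin N, -(c * ((k : ℝ) / ((N : ℝ) * T))) ≤ D i := by
    intro i
    calc -(c * ((k : ℝ) / ((N : ℝ) * T))) = ∑ _z ∈ A i, (-((k : ℝ) / ((N : ℝ) * T))) := by
          rw [Finset.sum_const, nsmul_eq_mul, hcardR i]; ring
      _ ≤ D i := by
          apply Finset.sum_le_sum
          intro z hz
          simp only [hA, hB, Finset.mem_filter, Finset.mem_univ, true_and] at hz
          have h := hstab1 z t i
          rw [show Function.update z t i = z from by rw [← hz.2, Function.update_eq_self]] at h
          linarith
  constructor
  · -- sum equals k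
    have hDsum : ∑ i : Fin N, D i = 0 := by
      rw [Finset.sum_congr rfl (fun i _ => hD i)]
      rw [Finset.sum_sub_distrib, hfib, Finset.sum_const, Finset.card_univ, Fintype.card_fin,
        nsmul_eq_mul]
      field_simp
      ring
    calc ∑ i : Fin N, p t i y = ∑ i : Fin N, ((T : ℝ) * (D i / c) + (k : ℝ) / N) :=
          Finset.sum_congr rfl (fun i _ => hpexpr i)
      _ = (T / c) * (∑ i : Fin N, D i) + (N : ℝ) * ((k : ℝ) / N) := by
          rw [Finset.sum_add_distrib, Finset.mul_sum, Finset.sum_const, Finset.card_univ,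
            Fintype.card_fin, nsmul_eq_mul]
          congr 1
          exact Finset.sum_congr rfl (fun i _ => by ring)
      _ = (k : ℝ) := by rw [hDsum]; field_simp; ring
  · intro i
    rw [hpexpr i]
    constructor
    · -- lower bound
      have h3 : 0 ≤ (T : ℝ) * D i + c * ((k : ℝ) / N) := by
        have h1 := hlb i
        have e : c * ((k : ℝ) / ((N : ℝ) * T)) * T = c * ((k : ℝ) / N) := by
          field_simp
        nlinarith
      calc (0 : ℝ) ≤ ((T : ℝ) * D i + c * ((k : ℝ) / N)) / c := div_nonneg h3 hc.le
        _ = (T : ℝ) * (D i / c) + (k : ℝ) / N := by field_simp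
    · -- upper bound
      have h3 : (T : ℝ) * D i + c * ((k : ℝ) / N) ≤ c := by
        have h1 := hub i
        have e : c * ((1 - (k : ℝ) / N) / T) * T = c - c * ((k : ℝ) / N) := by
          field_simp
        nlinarith
      calc (T : ℝ) * (D i / c) + (k : ℝ) / N
          = ((T : ℝ) * D i + c * ((k : ℝ) / N)) / c := by field_simp
        _ ≤ 1 := by rw [div_le_one hc]; exact h3
end

section
/- A stable loss function φ: [N]^T → [0,1] is achievable by an online k-set prediction policy (i.e., there exists a policy whose expected fraction of mistakes on any sequence y is at most φ(y)) if and only if E φ(z) ≥ 1 - k/N, where the expectation is over z drawn i.i.d. uniformly from [N]^T. -/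
open scoped Classical
open Finset Function

lemma sum_update_eq {α β : Type*} [Fintype α] [DecidableEq α] [Fintype β]
    (g : (α → β) → β → ℝ) (t : α)
    (hg : ∀ z i c, g (Function.update z t c) i = g z i) :
    (Fintype.card β : ℝ) * ∑ z : α → β, g z (z t) = ∑ z : α → β, ∑ i : β, g z i := by
  have hinv : Function.Involutive
      (fun p : (α → β) × β => (Function.update p.1 t p.2, p.1 t)) := by
    rintro ⟨z, i⟩
    simp [Function.update_idem, Function.update_eq_self]
  have := Equiv.sum_comp hinv.toPerm (fun p : (α → β) × β => g p.1 p.2)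
  simp only [Involutive.coe_toPerm] at this
  calc (Fintype.card β : ℝ) * ∑ z : α → β, g z (z t)
      = ∑ p : (α → β) × β, g p.1 (p.1 t) := by
        rw [Fintype.sum_prod_type]
        simp [Finset.sum_const, mul_comm, Finset.mul_sum]
    _ = ∑ p : (α → β) × β, g (Function.update p.1 t p.2) (p.1 t) := by
        refine Finset.sum_congr rfl fun p _ => ?_
        rw [hg]
    _ = ∑ p : (α → β) × β, g p.1 p.2 := this
    _ = ∑ z : α → β, ∑ i : β, g z i := by rw [Fintype.sum_prod_type]

def splice {N T : ℕ} (t : ℕ) (y z : Fin T → Fin N) : Fin T → Fin N :=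
  fun s => if (s : ℕ) < t then y s else z s

variable {N T : ℕ}

lemma splice_zero (y z : Fin T → Fin N) : splice 0 y z = z := by
  funext s; simp [splice]

lemma splice_top (y z : Fin T → Fin N) : splice T y z = y := by
  funext s; simp [splice, s.isLt]

lemma splice_update (t : Fin T) (y z : Fin T → Fin N) (c : Fin N) :
    splice (t : ℕ) y (Function.update z t c) = Function.update (splice t y z) t c := by
  funext s
  rcases eq_or_ne s t with rfl | hs
  · simp [splice]
  · simp [splice, Function.update_of_ne hs]

lemma splice_succ (t : Fin T) (y z : Fin T → Fin N) (i : Fin N) :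
    splice ((t : ℕ) + 1) (Function.update y t i) z
      = Function.update (splice t y z) t i := by
  funext s
  rcases eq_or_ne s t with rfl | hs
  · simp [splice]
  · have h : ((s : ℕ) < (t : ℕ) + 1) ↔ ((s : ℕ) < (t : ℕ)) := by
      constructor
      · intro h
        rcases Nat.lt_succ_iff_lt_or_eq.mp h with h | h
        · exact h
        · exact absurd (Fin.ext h) hs
      · omega
    simp [splice, Function.update_of_ne hs, h]

lemma splice_prefix (t : Fin T) (y y' z : Fin T → Fin N)
    (h : ∀ s : Fin T, s < t → y s = y' s) :
    splice (t : ℕ) y z = splice t y' z := by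
  funext s
  by_cases hs : (s : ℕ) < (t : ℕ)
  · simp [splice, hs, h s hs]
  · simp [splice, hs]

noncomputable def Esum {N T : ℕ} (φ : (Fin T → Fin N) → ℝ) (t : ℕ) (y : Fin T → Fin N) : ℝ :=
  ∑ z : Fin T → Fin N, φ (splice t y z)

lemma splice_apply_self (t : Fin T) (y z : Fin T → Fin N) :
    Function.update (splice (t:ℕ) y z) t (z t) = splice t y z := by
  have : (splice (t:ℕ) y z) t = z t := by simp [splice]
  rw [← this, Function.update_eq_self]

lemma Esum_succ (φ : (Fin T → Fin N) → ℝ) (t : Fin T) (y : Fin T → Fin N) (i : Fin N) :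
    Esum φ ((t : ℕ) + 1) (Function.update y t i)
      = ∑ z : Fin T → Fin N, φ (Function.update (splice (t:ℕ) y z) t i) := by
  refine Finset.sum_congr rfl fun z _ => ?_
  rw [splice_succ]

lemma Esum_succ_avg (φ : (Fin T → Fin N) → ℝ) (t : Fin T) (y : Fin T → Fin N) :
    ∑ i : Fin N, Esum φ ((t : ℕ) + 1) (Function.update y t i)
      = (N : ℝ) * Esum φ t y := by
  have key := sum_update_eq (fun z i => φ (Function.update (splice (t:ℕ) y z) t i)) t
    (by
      intro z i c
      simp only [splice_update, Function.update_idem])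
  simp only [Fintype.card_fin] at key
  have h1 : ∑ z : Fin T → Fin N, φ (Function.update (splice (t:ℕ) y z) t (z t))
      = Esum φ t y := by
    refine Finset.sum_congr rfl fun z _ => ?_
    rw [splice_apply_self]
  simp only [h1] at key
  rw [key, Finset.sum_comm]
  refine Finset.sum_congr rfl fun i _ => (Esum_succ φ t y i)

lemma exists_w_of_int (N k : ℕ) (p : Fin N → ℝ) (h01 : ∀ i, p i = 0 ∨ p i = 1)
    (hsum : ∑ i, p i = k) :
    ∃ w : {s : Finset (Fin N) // s.card = k} → ℝ, (∀ s, 0 ≤ w s) ∧ (∑ s, w s = 1) ∧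
      ∀ i, (∑ s : {s : Finset (Fin N) // s.card = k}, if i ∈ s.1 then w s else 0) = p i := by
  set s₀ : Finset (Fin N) := univ.filter (fun i => p i = 1) with hs₀
  have hmem : ∀ i, i ∈ s₀ ↔ p i = 1 := by intro i; simp [hs₀]
  have hcard : s₀.card = k := by
    have h : (s₀.card : ℝ) = (k : ℝ) := by
      rw [← hsum]
      rw [show ∑ i, p i = ∑ i ∈ s₀, p i from
        (Finset.sum_subset (Finset.subset_univ s₀) (fun x _ hx => by
          rcases h01 x with h | h
          · exact h
          · exact absurd ((hmem x).mpr h) hx)).symm]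
      rw [Finset.sum_congr rfl (fun x hx => (hmem x).mp hx), Finset.sum_const,
        nsmul_eq_mul, mul_one]
    exact_mod_cast h
  set e : {s : Finset (Fin N) // s.card = k} := ⟨s₀, hcard⟩ with he
  refine ⟨fun s => if s = e then 1 else 0, fun s => by positivity, ?_, ?_⟩
  · simp
  · intro i
    have : ∀ s : {s : Finset (Fin N) // s.card = k},
        (if i ∈ s.1 then (if s = e then (1:ℝ) else 0) else 0)
          = if s = e then (if i ∈ e.1 then (1:ℝ) else 0) else 0 := by
      intro s
      rcases eq_or_ne s e with rfl | hse
      · simp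
      · simp [hse]
    rw [Finset.sum_congr rfl (fun s _ => this s)]
    simp only [Finset.sum_ite_eq', Finset.mem_univ, if_true]
    rcases h01 i with h | h
    · rw [h]; simp [he, hmem, h]
    · rw [h]; simp [he, hmem, h]

lemma exists_w (N k : ℕ) (n : ℕ) : ∀ (p : Fin N → ℝ),
    (univ.filter (fun i => p i ≠ 0 ∧ p i ≠ 1)).card ≤ n →
    (∀ i, 0 ≤ p i) → (∀ i, p i ≤ 1) → (∑ i, p i = k) →
    ∃ w : {s : Finset (Fin N) // s.card = k} → ℝ, (∀ s, 0 ≤ w s) ∧ (∑ s, w s = 1) ∧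
      ∀ i, (∑ s : {s : Finset (Fin N) // s.card = k}, if i ∈ s.1 then w s else 0) = p i := by
  induction n with
  | zero =>
    intro p hc h0 h1 hs
    refine exists_w_of_int N k p (fun i => ?_) hs
    by_contra h
    push_neg at h
    have : i ∈ univ.filter (fun i => p i ≠ 0 ∧ p i ≠ 1) := by
      simp [h.1, h.2]
    have := Finset.card_pos.mpr ⟨i, this⟩
    omega
  | succ n ih =>
    intro p hc h0 h1 hs
    by_cases hall : ∀ i, p i = 0 ∨ p i = 1
    · exact exists_w_of_int N k p hall hs
    push_neg at hall
    obtain ⟨i₀, hi0, hi1⟩ := hall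
    have hpi : 0 < p i₀ := lt_of_le_of_ne (h0 i₀) (Ne.symm hi0)
    have hpi' : p i₀ < 1 := lt_of_le_of_ne (h1 i₀) hi1
    by_cases hex : ∃ j, j ≠ i₀ ∧ p j ≠ 0 ∧ p j ≠ 1
    · obtain ⟨j₀, hji, hj0, hj1⟩ := hex
      have hpj : 0 < p j₀ := lt_of_le_of_ne (h0 j₀) (Ne.symm hj0)
      have hpj' : p j₀ < 1 := lt_of_le_of_ne (h1 j₀) hj1
      set a := min (1 - p i₀) (p j₀) with hadef
      set b := min (p i₀) (1 - p j₀) with hbdef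
      have ha : 0 < a := lt_min (by linarith) hpj
      have hb : 0 < b := lt_min hpi (by linarith)
      have ha1 : a ≤ 1 - p i₀ := min_le_left _ _
      have ha2 : a ≤ p j₀ := min_le_right _ _
      have hb1 : b ≤ p i₀ := min_le_left _ _
      have hb2 : b ≤ 1 - p j₀ := min_le_right _ _
      set qp : Fin N → ℝ := fun i => if i = i₀ then p i₀ + a else if i = j₀ then p j₀ - a else p i with hqp
      set qm : Fin N → ℝ := fun i => if i = i₀ then p i₀ - b else if i = j₀ then p j₀ + b else p i with hqm
      -- bounds
      have hqp0 : ∀ i, 0 ≤ qp i := by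
        intro i; simp only [hqp]; split_ifs <;> [linarith; linarith; exact h0 i]
      have hqp1 : ∀ i, qp i ≤ 1 := by
        intro i; simp only [hqp]; split_ifs <;> [linarith; linarith; exact h1 i]
      have hqm0 : ∀ i, 0 ≤ qm i := by
        intro i; simp only [hqm]; split_ifs <;> [linarith; linarith; exact h0 i]
      have hqm1 : ∀ i, qm i ≤ 1 := by
        intro i; simp only [hqm]; split_ifs <;> [linarith; linarith; exact h1 i]
      -- sums
      have hsum_aux : ∀ (c : ℝ),
          ∑ i : Fin N, (if i = i₀ then p i₀ + c else if i = j₀ then p j₀ - c else p i) = k := by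
        intro c
        have hpt : ∀ i : Fin N, (if i = i₀ then p i₀ + c else if i = j₀ then p j₀ - c else p i)
            = p i + ((if i = i₀ then c else 0) + (if i = j₀ then -c else 0)) := by
          intro i
          rcases eq_or_ne i i₀ with rfl | h1'
          · simp [Ne.symm hji]
          · rcases eq_or_ne i j₀ with rfl | h2'
            · simp [h1']; ring
            · simp [h1', h2']
        rw [Finset.sum_congr rfl (fun i _ => hpt i), Finset.sum_add_distrib,
          Finset.sum_add_distrib, Finset.sum_ite_eq' univ i₀ (fun _ => c),
          Finset.sum_ite_eq' univ j₀ (fun _ => -c)]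
        simp [hs]
      have hqps : ∑ i, qp i = k := hsum_aux a
      have hqms : ∑ i, qm i = k := by
        have := hsum_aux (-b)
        simpa [hqm, sub_neg_eq_add, sub_eq_add_neg] using this
      -- fractional count decrease
      have hmemp_i : i₀ ∈ univ.filter (fun i => p i ≠ 0 ∧ p i ≠ 1) := by simp [hi0, hi1]
      have hmemp_j : j₀ ∈ univ.filter (fun i => p i ≠ 0 ∧ p i ≠ 1) := by simp [hj0, hj1]
      have hsubp : ∀ (q : Fin N → ℝ), (∀ i, i ≠ i₀ → i ≠ j₀ → q i = p i) →
          (∃ x ∈ univ.filter (fun i => p i ≠ 0 ∧ p i ≠ 1), (q x = 0 ∨ q x = 1)) →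
          (univ.filter (fun i => q i ≠ 0 ∧ q i ≠ 1)).card ≤ n := by
        intro q hoff ⟨x, hxp, hxq⟩
        have hsub : univ.filter (fun i => q i ≠ 0 ∧ q i ≠ 1)
            ⊆ (univ.filter (fun i => p i ≠ 0 ∧ p i ≠ 1)).erase x := by
          intro y hy
          simp only [Finset.mem_filter, Finset.mem_univ, true_and] at hy
          rw [Finset.mem_erase]
          constructor
          · rintro rfl
            rcases hxq with h | h
            · exact hy.1 h
            · exact hy.2 h
          · simp only [Finset.mem_filter, Finset.mem_univ, true_and]
            rcases eq_or_ne y i₀ with rfl | h1'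
            · exact ⟨hi0, hi1⟩
            · rcases eq_or_ne y j₀ with rfl | h2'
              · exact ⟨hj0, hj1⟩
              · rw [← hoff y h1' h2']; exact hy
        have := Finset.card_le_card hsub
        rw [Finset.card_erase_of_mem hxp] at this
        omega
      have hqpc : (univ.filter (fun i => qp i ≠ 0 ∧ qp i ≠ 1)).card ≤ n := by
        refine hsubp qp (fun i h1' h2' => by simp [hqp, h1', h2']) ?_
        rcases min_cases (1 - p i₀) (p j₀) with ⟨h, _⟩ | ⟨h, _⟩
        · refine ⟨i₀, hmemp_i, Or.inr ?_⟩
          show (if i₀ = i₀ then p i₀ + a else if i₀ = j₀ then p j₀ - a else p i₀) = 1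
          rw [if_pos rfl, hadef, h]; ring
        · refine ⟨j₀, hmemp_j, Or.inl ?_⟩
          show (if j₀ = i₀ then p i₀ + a else if j₀ = j₀ then p j₀ - a else p j₀) = 0
          rw [if_neg hji, if_pos rfl, hadef, h]; ring
      have hqmc : (univ.filter (fun i => qm i ≠ 0 ∧ qm i ≠ 1)).card ≤ n := by
        refine hsubp qm (fun i h1' h2' => by simp [hqm, h1', h2']) ?_
        rcases min_cases (p i₀) (1 - p j₀) with ⟨h, _⟩ | ⟨h, _⟩
        · refine ⟨i₀, hmemp_i, Or.inl ?_⟩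
          show (if i₀ = i₀ then p i₀ - b else if i₀ = j₀ then p j₀ + b else p i₀) = 0
          rw [if_pos rfl, hbdef, h]; ring
        · refine ⟨j₀, hmemp_j, Or.inr ?_⟩
          show (if j₀ = i₀ then p i₀ - b else if j₀ = j₀ then p j₀ + b else p j₀) = 1
          rw [if_neg hji, if_pos rfl, hbdef, h]; ring
      obtain ⟨wp, hwp0, hwp1, hwpm⟩ := ih qp hqpc hqp0 hqp1 hqps
      obtain ⟨wm, hwm0, hwm1, hwmm⟩ := ih qm hqmc hqm0 hqm1 hqms
      have hab : 0 < a + b := by linarith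
      set lam := b / (a + b) with hlam
      have hlam0 : 0 ≤ lam := by positivity
      have hlam1 : lam ≤ 1 := by
        rw [hlam, div_le_one hab]; linarith
      refine ⟨fun s => lam * wp s + (1 - lam) * wm s,
        fun s => add_nonneg (mul_nonneg hlam0 (hwp0 s)) (mul_nonneg (by linarith) (hwm0 s)),
        ?_, ?_⟩
      · rw [Finset.sum_add_distrib, ← Finset.mul_sum, ← Finset.mul_sum, hwp1, hwm1]; ring
      · intro i
        have hsplit : (∑ s : {s : Finset (Fin N) // s.card = k},
            if i ∈ s.1 then lam * wp s + (1 - lam) * wm s else 0)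
            = lam * qp i + (1 - lam) * qm i := by
          rw [← hwpm i, ← hwmm i, Finset.mul_sum, Finset.mul_sum, ← Finset.sum_add_distrib]
          refine Finset.sum_congr rfl fun s _ => ?_
          split_ifs <;> ring
        rw [hsplit]
        rcases eq_or_ne i i₀ with rfl | h1'
        · simp only [hqp, hqm, if_pos rfl]
          rw [hlam]; field_simp; ring
        · rcases eq_or_ne i j₀ with rfl | h2'
          · simp only [hqp, hqm, if_neg h1', if_pos rfl, if_true]
            rw [hlam]; field_simp; ring
          · simp only [hqp, hqm, if_neg h1', if_neg h2']; ring
    · -- contradiction: sum can't be an integer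
      exfalso
      push_neg at hex
      set m := ((univ.erase i₀).filter (fun j => p j = 1)).card with hm
      have hsplit : ∑ j ∈ univ.erase i₀, p j = m := by
        rw [← Finset.sum_filter_add_sum_filter_not (univ.erase i₀) (fun j => p j = 1) p]
        have h1' : ∑ j ∈ (univ.erase i₀).filter (fun j => p j = 1), p j = m := by
          rw [Finset.sum_congr rfl (fun x hx => (Finset.mem_filter.mp hx).2),
            Finset.sum_const, nsmul_eq_mul, mul_one, hm]
        have h2' : ∑ j ∈ (univ.erase i₀).filter (fun j => ¬ p j = 1), p j = 0 := by
          refine Finset.sum_eq_zero fun x hx => ?_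
          simp only [Finset.mem_filter, Finset.mem_erase] at hx
          by_cases hx0 : p x = 0
          · exact hx0
          · exact absurd (hex x hx.1.1 hx0) hx.2
        rw [h1', h2', add_zero]
      have htot : p i₀ + ∑ j ∈ univ.erase i₀, p j = k := by
        rw [Finset.add_sum_erase univ p (Finset.mem_univ i₀)]; exact hs
      have hpi0 : p i₀ = (k : ℝ) - m := by rw [hsplit] at htot; linarith
      have h1' : (0:ℝ) < (k:ℝ) - m := by rw [← hpi0]; exact hpi
      have h2' : (k:ℝ) - m < 1 := by rw [← hpi0]; exact hpi'
      have h3 : (m:ℤ) < (k:ℤ) := by exact_mod_cast (by linarith : (m:ℝ) < k)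
      have h4 : (k:ℤ) < (m:ℤ) + 1 := by exact_mod_cast (by linarith : (k:ℝ) < (m:ℝ) + 1)
      omega

noncomputable def pickW (N k : ℕ) (p : Fin N → ℝ) : {s : Finset (Fin N) // s.card = k} → ℝ :=
  if h : ((∀ i, 0 ≤ p i) ∧ (∀ i, p i ≤ 1) ∧ (∑ i, p i = (k:ℝ))) then
    Classical.choose (exists_w N k N p
      (le_trans (Finset.card_filter_le _ _) (by simp)) h.1 h.2.1 h.2.2)
  else if hne : ∃ s : Finset (Fin N), s.card = k then
    fun s => if s = ⟨hne.choose, hne.choose_spec⟩ then 1 else 0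
  else fun _ => 0

lemma pickW_spec (N k : ℕ) (hkN : k ≤ N) (p : Fin N → ℝ) :
    (∀ s, 0 ≤ pickW N k p s) ∧ (∑ s, pickW N k p s = 1) ∧
    ((∀ i, 0 ≤ p i) → (∀ i, p i ≤ 1) → (∑ i, p i = (k:ℝ)) →
      ∀ i, (∑ s : {s : Finset (Fin N) // s.card = k},
        if i ∈ s.1 then pickW N k p s else 0) = p i) := by
  by_cases h : ((∀ i, 0 ≤ p i) ∧ (∀ i, p i ≤ 1) ∧ (∑ i, p i = (k:ℝ)))
  · have hch := Classical.choose_spec (exists_w N k N p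
      (le_trans (Finset.card_filter_le _ _) (by simp)) h.1 h.2.1 h.2.2)
    simp only [pickW, dif_pos h]
    exact ⟨hch.1, hch.2.1, fun _ _ _ => hch.2.2⟩
  · have hne : ∃ s : Finset (Fin N), s.card = k := by
      obtain ⟨t, _, ht⟩ := Finset.exists_subset_card_eq (by simp [hkN] :
        k ≤ (univ : Finset (Fin N)).card)
      exact ⟨t, ht⟩
    simp only [pickW, dif_neg h, dif_pos hne]
    refine ⟨fun s => by positivity, by simp, fun h0 h1 hs => absurd ⟨h0, h1, hs⟩ h⟩

noncomputable def wPMF (N k : ℕ) (hkN : k ≤ N) (p : Fin N → ℝ) :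
    PMF {s : Finset (Fin N) // s.card = k} :=
  PMF.ofFintype (fun s => ENNReal.ofReal (pickW N k p s)) (by
    rw [← ENNReal.ofReal_sum_of_nonneg (fun s _ => (pickW_spec N k hkN p).1 s),
      (pickW_spec N k hkN p).2.1, ENNReal.ofReal_one])

lemma wPMF_toReal (N k : ℕ) (hkN : k ≤ N) (p : Fin N → ℝ)
    (s : {s : Finset (Fin N) // s.card = k}) :
    ((wPMF N k hkN p) s).toReal = pickW N k p s := by
  rw [wPMF, PMF.ofFintype_apply, ENNReal.toReal_ofReal ((pickW_spec N k hkN p).1 s)]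

/-- The expected mistake fraction of an online `k`-set prediction policy `A` (which outputs
at round `t` a random `k`-subset distributed as `A t y`, depending only on the prefix
`y 1, ..., y (t-1)`) on the sequence `y`:
`μ_A(y) = (1/T) ∑_t P(y t ∉ S t)`. -/
noncomputable def mistakeFraction {N T k : ℕ}
    (A : Fin T → (Fin T → Fin N) → PMF {s : Finset (Fin N) // s.card = k})
    (y : Fin T → Fin N) : ℝ :=
  (1 / (T : ℝ)) * ∑ t : Fin T,
    (1 - ∑ s : {s : Finset (Fin N) // s.card = k},
      if y t ∈ s.1 then ((A t y) s).toReal else 0)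

/-- A stable loss function `φ : [N]^T → [0,1]` is achievable by an online
`k`-set prediction policy (whose round-`t` output distribution depends only on
`y 1, ..., y (t-1)`) if and only if `E φ(z) ≥ 1 - k/N` for `z` i.i.d. uniform on `[N]^T`. -/
theorem stmt_4 (N T k : ℕ) (hk : 1 ≤ k) (hkN : k ≤ N) (hT : 1 ≤ T)
    (φ : (Fin T → Fin N) → ℝ)
    (hrange : ∀ y, 0 ≤ φ y ∧ φ y ≤ 1)
    (hstab1 : ∀ (y : Fin T → Fin N) (t : Fin T) (i : Fin N),
      φ (Function.update y t i) - (1 / (N : ℝ)) * ∑ j : Fin N, φ (Function.update y t j)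
        ≤ k / ((N : ℝ) * T))
    (hstab2 : ∀ (y : Fin T → Fin N) (t : Fin T) (i : Fin N),
      (1 / (N : ℝ)) * (∑ j : Fin N, φ (Function.update y t j)) - φ (Function.update y t i)
        ≤ (1 - (k : ℝ) / N) / T) :
    (∃ A : Fin T → (Fin T → Fin N) → PMF {s : Finset (Fin N) // s.card = k},
      (∀ (t : Fin T) (y y' : Fin T → Fin N), (∀ s : Fin T, s < t → y s = y' s) →
        A t y = A t y') ∧
      (∀ y : Fin T → Fin N, mistakeFraction A y ≤ φ y))
    ↔ (1 / (N : ℝ) ^ T) * ∑ z : Fin T → Fin N, φ z ≥ 1 - (k : ℝ) / N := by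
  constructor
  · rintro ⟨A, hmeas, hach⟩
    have hN : 0 < N := le_trans hk hkN
    have hNR : (0:ℝ) < N := by exact_mod_cast hN
    have hTR : (0:ℝ) < T := by exact_mod_cast hT
    have hNT : (0:ℝ) < (N:ℝ) ^ T := by positivity
    have hcardz : (Fintype.card (Fin T → Fin N) : ℝ) = (N:ℝ) ^ T := by rw [Fintype.card_fun, Fintype.card_fin, Fintype.card_fin, Nat.cast_pow]
    -- sum of coverage for a fixed round
    have hcover : ∀ t : Fin T,
        ∑ z : Fin T → Fin N, (∑ s : {s : Finset (Fin N) // s.card = k},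
          if z t ∈ s.1 then ((A t z) s).toReal else 0) = (N:ℝ) ^ T * ((k:ℝ) / N) := by
      intro t
      set g : (Fin T → Fin N) → Fin N → ℝ := fun z i =>
        ∑ s : {s : Finset (Fin N) // s.card = k}, if i ∈ s.1 then ((A t z) s).toReal else 0
        with hg
      have hginv : ∀ z i c, g (Function.update z t c) i = g z i := by
        intro z i c
        have : A t (Function.update z t c) = A t z :=
          hmeas t _ z (fun s hs => Function.update_of_ne (Fin.ne_of_lt hs) _ _)
        simp only [hg, this]
      have key := sum_update_eq g t hginv
      simp only [Fintype.card_fin] at key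
      have hinner : ∀ z : Fin T → Fin N, ∑ i : Fin N, g z i = (k : ℝ) := by
        intro z
        have hone : ∑ s : {s : Finset (Fin N) // s.card = k}, ((A t z) s).toReal = 1 := by
          have h1 : ∑ s : {s : Finset (Fin N) // s.card = k}, (A t z) s = 1 := by
            rw [← tsum_fintype (L := SummationFilter.unconditional _)]; exact (A t z).tsum_coe
          have := congrArg ENNReal.toReal h1
          rwa [ENNReal.toReal_sum (fun s _ => (A t z).apply_ne_top s), ENNReal.toReal_one] at this
        calc ∑ i : Fin N, g z i
            = ∑ s : {s : Finset (Fin N) // s.card = k}, ∑ i : Fin N,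
                (if i ∈ s.1 then ((A t z) s).toReal else 0) := Finset.sum_comm
          _ = ∑ s : {s : Finset (Fin N) // s.card = k}, (k:ℝ) * ((A t z) s).toReal := by
              refine Finset.sum_congr rfl fun s _ => ?_
              rw [Finset.sum_ite_mem, Finset.univ_inter, Finset.sum_const, s.2, nsmul_eq_mul]
          _ = (k:ℝ) * ∑ s : {s : Finset (Fin N) // s.card = k}, ((A t z) s).toReal := by
              rw [Finset.mul_sum]
          _ = (k:ℝ) := by rw [hone, mul_one]
      rw [Finset.sum_congr rfl (fun z _ => hinner z), Finset.sum_const, nsmul_eq_mul, Finset.card_univ, hcardz] at key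
      have := mul_left_cancel₀ (ne_of_gt hNR) (by rw [key]; field_simp :
        (N:ℝ) * (∑ z : Fin T → Fin N, g z (z t)) = (N:ℝ) * ((N:ℝ)^T * ((k:ℝ)/N)))
      exact this
    -- total mistakes
    have htotal : ∑ z : Fin T → Fin N, mistakeFraction A z = (N:ℝ)^T * (1 - (k:ℝ)/N) := by
      unfold mistakeFraction
      rw [← Finset.mul_sum, Finset.sum_comm]
      rw [Finset.sum_congr rfl (fun t _ => by
        rw [Finset.sum_sub_distrib, Finset.sum_const, nsmul_eq_mul, mul_one, Finset.card_univ, hcardz, hcover t]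
        : ∀ t ∈ univ, _ = (N:ℝ)^T - (N:ℝ)^T * ((k:ℝ)/N))]
      rw [Finset.sum_const, Finset.card_univ, Fintype.card_fin, nsmul_eq_mul]
      field_simp
    have hle : (N:ℝ)^T * (1 - (k:ℝ)/N) ≤ ∑ z : Fin T → Fin N, φ z := by
      rw [← htotal]
      exact Finset.sum_le_sum (fun z _ => hach z)
    rw [ge_iff_le, one_div, ← div_eq_inv_mul, le_div_iff₀ hNT]
    linarith [hle]
  · intro hM
    have hN : 0 < N := le_trans hk hkN
    have hNR : (0:ℝ) < N := by exact_mod_cast hN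
    have hTR : (0:ℝ) < T := by exact_mod_cast hT
    have hNT : (0:ℝ) < (N:ℝ) ^ T := by positivity
    have hcardz : (Fintype.card (Fin T → Fin N) : ℝ) = (N:ℝ) ^ T := by
      rw [Fintype.card_fun, Fintype.card_fin, Fintype.card_fin, Nat.cast_pow]
    set pv : Fin T → (Fin T → Fin N) → Fin N → ℝ := fun t y i =>
      (k:ℝ)/N - (T:ℝ) * ((1/(N:ℝ)^T) *
        (Esum φ ((t:ℕ)+1) (Function.update y t i) - Esum φ (t:ℕ) y)) with hpvdef
    -- expression of Esum t y as a sum of averages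
    have havg : ∀ (t : Fin T) (y : Fin T → Fin N),
        Esum φ (t:ℕ) y = ∑ z : Fin T → Fin N,
          (1/(N:ℝ)) * ∑ j : Fin N, φ (Function.update (splice (t:ℕ) y z) t j) := by
      intro t y
      rw [← Finset.mul_sum, Finset.sum_comm,
        Finset.sum_congr rfl (fun j _ => (Esum_succ φ t y j).symm), Esum_succ_avg]
      field_simp
    -- stability bounds for differences
    have hd1 : ∀ (t : Fin T) (y : Fin T → Fin N) (i : Fin N),
        Esum φ ((t:ℕ)+1) (Function.update y t i) - Esum φ (t:ℕ) y
          ≤ (N:ℝ)^T * ((k:ℝ)/((N:ℝ)*T)) := by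
      intro t y i
      rw [Esum_succ, havg t y, ← Finset.sum_sub_distrib]
      calc ∑ z : Fin T → Fin N, (φ (Function.update (splice (t:ℕ) y z) t i)
            - (1/(N:ℝ)) * ∑ j : Fin N, φ (Function.update (splice (t:ℕ) y z) t j))
          ≤ ∑ _z : Fin T → Fin N, (k:ℝ)/((N:ℝ)*T) :=
            Finset.sum_le_sum (fun z _ => hstab1 (splice (t:ℕ) y z) t i)
        _ = (N:ℝ)^T * ((k:ℝ)/((N:ℝ)*T)) := by
            rw [Finset.sum_const, nsmul_eq_mul, Finset.card_univ, hcardz]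
    have hd2 : ∀ (t : Fin T) (y : Fin T → Fin N) (i : Fin N),
        Esum φ (t:ℕ) y - Esum φ ((t:ℕ)+1) (Function.update y t i)
          ≤ (N:ℝ)^T * ((1 - (k:ℝ)/N)/T) := by
      intro t y i
      rw [Esum_succ, havg t y, ← Finset.sum_sub_distrib]
      calc ∑ z : Fin T → Fin N, ((1/(N:ℝ)) * ∑ j : Fin N,
              φ (Function.update (splice (t:ℕ) y z) t j)
            - φ (Function.update (splice (t:ℕ) y z) t i))
          ≤ ∑ _z : Fin T → Fin N, (1 - (k:ℝ)/N)/T :=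
            Finset.sum_le_sum (fun z _ => hstab2 (splice (t:ℕ) y z) t i)
        _ = (N:ℝ)^T * ((1 - (k:ℝ)/N)/T) := by
            rw [Finset.sum_const, nsmul_eq_mul, Finset.card_univ, hcardz]
    -- pv properties
    have hpv0 : ∀ (t : Fin T) (y : Fin T → Fin N) (i : Fin N), 0 ≤ pv t y i := by
      intro t y i
      have h1 : (1/(N:ℝ)^T) * (Esum φ ((t:ℕ)+1) (Function.update y t i) - Esum φ (t:ℕ) y)
          ≤ (1/(N:ℝ)^T) * ((N:ℝ)^T * ((k:ℝ)/((N:ℝ)*T))) :=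
        mul_le_mul_of_nonneg_left (hd1 t y i) (by positivity)
      have h2 : (T:ℝ) * ((1/(N:ℝ)^T) * (Esum φ ((t:ℕ)+1) (Function.update y t i)
          - Esum φ (t:ℕ) y)) ≤ (T:ℝ) * ((1/(N:ℝ)^T) * ((N:ℝ)^T * ((k:ℝ)/((N:ℝ)*T)))) :=
        mul_le_mul_of_nonneg_left h1 (by positivity)
      have h3 : (T:ℝ) * ((1/(N:ℝ)^T) * ((N:ℝ)^T * ((k:ℝ)/((N:ℝ)*T)))) = (k:ℝ)/N := by
        field_simp
      simp only [hpvdef]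
      linarith
    have hpv1 : ∀ (t : Fin T) (y : Fin T → Fin N) (i : Fin N), pv t y i ≤ 1 := by
      intro t y i
      have h1 : (1/(N:ℝ)^T) * (Esum φ (t:ℕ) y - Esum φ ((t:ℕ)+1) (Function.update y t i))
          ≤ (1/(N:ℝ)^T) * ((N:ℝ)^T * ((1 - (k:ℝ)/N)/T)) :=
        mul_le_mul_of_nonneg_left (hd2 t y i) (by positivity)
      have h2 : (T:ℝ) * ((1/(N:ℝ)^T) * (Esum φ (t:ℕ) y
          - Esum φ ((t:ℕ)+1) (Function.update y t i)))
          ≤ (T:ℝ) * ((1/(N:ℝ)^T) * ((N:ℝ)^T * ((1 - (k:ℝ)/N)/T))) :=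
        mul_le_mul_of_nonneg_left h1 (by positivity)
      have h3 : (T:ℝ) * ((1/(N:ℝ)^T) * ((N:ℝ)^T * ((1 - (k:ℝ)/N)/T))) = 1 - (k:ℝ)/N := by
        field_simp
      simp only [hpvdef]
      nlinarith [h2, h3]
    have hpvs : ∀ (t : Fin T) (y : Fin T → Fin N), ∑ i, pv t y i = (k:ℝ) := by
      intro t y
      have hpt : ∀ i : Fin N, pv t y i = (k:ℝ)/N
          - ((T:ℝ) * (1/(N:ℝ)^T)) * Esum φ ((t:ℕ)+1) (Function.update y t i)
          + ((T:ℝ) * (1/(N:ℝ)^T)) * Esum φ (t:ℕ) y := by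
        intro i; simp only [hpvdef]; ring
      rw [Finset.sum_congr rfl (fun i _ => hpt i), Finset.sum_add_distrib,
        Finset.sum_sub_distrib, ← Finset.mul_sum, Esum_succ_avg, Finset.sum_const,
        Finset.sum_const, Finset.card_univ, Fintype.card_fin, nsmul_eq_mul, nsmul_eq_mul]
      field_simp
      ring
    -- the policy
    refine ⟨fun t y => wPMF N k hkN (pv t y), ?_, ?_⟩
    · intro t y y' hpre
      have hEt : Esum φ (t:ℕ) y = Esum φ (t:ℕ) y' :=
        Finset.sum_congr rfl fun z _ => by rw [splice_prefix t y y' z hpre]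
      have hEt1 : ∀ i, Esum φ ((t:ℕ)+1) (Function.update y t i)
          = Esum φ ((t:ℕ)+1) (Function.update y' t i) := by
        intro i
        rw [Esum_succ, Esum_succ]
        exact Finset.sum_congr rfl fun z _ => by rw [splice_prefix t y y' z hpre]
      have hpveq : pv t y = pv t y' := by
        funext i
        simp only [hpvdef, hEt, hEt1 i]
      show wPMF N k hkN (pv t y) = wPMF N k hkN (pv t y')
      rw [hpveq]
    · intro y
      have hcov : ∀ t : Fin T,
          (∑ s : {s : Finset (Fin N) // s.card = k},
            if y t ∈ s.1 then ((wPMF N k hkN (pv t y)) s).toReal else 0) = pv t y (y t) := by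
        intro t
        rw [← (pickW_spec N k hkN (pv t y)).2.2 (hpv0 t y) (hpv1 t y) (hpvs t y) (y t)]
        refine Finset.sum_congr rfl fun s _ => ?_
        split_ifs
        · exact wPMF_toReal N k hkN (pv t y) s
        · rfl
      have hpvyt : ∀ t : Fin T, pv t y (y t) = (k:ℝ)/N
          - (T:ℝ) * ((1/(N:ℝ)^T) * (Esum φ ((t:ℕ)+1) y - Esum φ (t:ℕ) y)) := by
        intro t
        simp only [hpvdef, Function.update_eq_self]
      have htel : ∑ t : Fin T, (Esum φ ((t:ℕ)+1) y - Esum φ (t:ℕ) y)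
          = Esum φ T y - Esum φ 0 y := by
        rw [Fin.sum_univ_eq_sum_range (fun n => Esum φ (n+1) y - Esum φ n y) T]
        exact Finset.sum_range_sub (fun n => Esum φ n y) T
      have hEsT : Esum φ T y = (N:ℝ)^T * φ y := by
        unfold Esum
        rw [Finset.sum_congr rfl (fun z _ => by rw [splice_top]),
          Finset.sum_const, nsmul_eq_mul, Finset.card_univ, hcardz]
      have hEs0 : Esum φ 0 y = ∑ z : Fin T → Fin N, φ z :=
        Finset.sum_congr rfl fun z _ => by rw [splice_zero]
      unfold mistakeFraction
      have hterm : ∀ t : Fin T, t ∈ (univ : Finset (Fin T)) →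
          (1 - ∑ s : {s : Finset (Fin N) // s.card = k},
            if y t ∈ s.1 then ((wPMF N k hkN (pv t y)) s).toReal else 0)
          = (1 - (k:ℝ)/N) + ((T:ℝ) * (1/(N:ℝ)^T))
              * (Esum φ ((t:ℕ)+1) y - Esum φ (t:ℕ) y) := by
        intro t _
        rw [hcov t, hpvyt t]; ring
      rw [Finset.sum_congr rfl hterm, Finset.sum_add_distrib, ← Finset.mul_sum, htel,
        hEsT, hEs0, Finset.sum_const, Finset.card_univ, Fintype.card_fin, nsmul_eq_mul]
      set S := ∑ z : Fin T → Fin N, φ z with hS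
      have hid : (1/(T:ℝ)) * ((T:ℝ) * (1-(k:ℝ)/N)
          + (T:ℝ) * (1/(N:ℝ)^T) * ((N:ℝ)^T * φ y - S))
          = 1 - (k:ℝ)/N + φ y - (1/(N:ℝ)^T) * S := by
        field_simp
        ring
      rw [hid]
      linarith [hM]
end

section
/- For positive weights w(1),...,w(N) and 1 ≤ k ≤ N, define p(i) = w(i) · e_{k-1}(w_{-i}) / e_k(w), where e_l denotes the elementary symmetric polynomial of order l and w_{-i} is the weight vector with the i-th coordinate removed. Then ∑_{i=1}^N p(i) = k and 0 ≤ p(i) ≤ 1 for all i. -/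
/-- Elementary symmetric polynomial of order `l` of the weights `w` restricted to the
index set `s`: `e_l(w) = ∑_{I ⊆ s, |I| = l} ∏_{j ∈ I} w j`. -/
noncomputable def esymWeights {N : ℕ} (s : Finset (Fin N)) (l : ℕ) (w : Fin N → ℝ) : ℝ :=
  ∑ I ∈ s.powersetCard l, ∏ j ∈ I, w j

lemma esym_nonneg {N : ℕ} (s : Finset (Fin N)) (l : ℕ) (w : Fin N → ℝ)
    (hw : ∀ i, 0 < w i) : 0 ≤ esymWeights s l w :=
  Finset.sum_nonneg fun _ _ => Finset.prod_nonneg fun j _ => (hw j).le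

lemma esym_pos {N : ℕ} (s : Finset (Fin N)) (l : ℕ) (w : Fin N → ℝ)
    (hw : ∀ i, 0 < w i) (hl : l ≤ s.card) : 0 < esymWeights s l w := by
  obtain ⟨I, hI⟩ := Finset.exists_subset_card_eq hl
  exact Finset.sum_pos' (fun J _ => Finset.prod_nonneg fun j _ => (hw j).le)
    ⟨I, Finset.mem_powersetCard.2 hI, Finset.prod_pos fun j _ => hw j⟩

lemma esym_split {N : ℕ} (s : Finset (Fin N)) (k : ℕ) (w : Fin N → ℝ)
    {i : Fin N} (hi : i ∈ s) :
    esymWeights s (k + 1) w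
      = esymWeights (s.erase i) (k + 1) w + w i * esymWeights (s.erase i) k w := by
  have hni : i ∉ s.erase i := Finset.notMem_erase i s
  unfold esymWeights
  conv_lhs => rw [← Finset.insert_erase hi, Finset.powersetCard_succ_insert hni]
  rw [Finset.sum_union, Finset.sum_image, Finset.mul_sum]
  · congr 1
    apply Finset.sum_congr rfl
    intro J hJ
    have hiJ : i ∉ J := fun h' => hni ((Finset.mem_powersetCard.1 hJ).1 h')
    rw [Finset.prod_insert hiJ]
  · intro a ha b hb hab
    have hia : i ∉ a := fun h' => hni ((Finset.mem_powersetCard.1 ha).1 h')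
    have hib : i ∉ b := fun h' => hni ((Finset.mem_powersetCard.1 hb).1 h')
    have := congrArg (fun t => Finset.erase t i) hab
    simpa [Finset.erase_insert hia, Finset.erase_insert hib] using this
  · rw [Finset.disjoint_left]
    intro J hJ hJ'
    obtain ⟨K, hK, rfl⟩ := Finset.mem_image.1 hJ'
    exact hni ((Finset.mem_powersetCard.1 hJ).1 (Finset.mem_insert_self i K))

lemma esym_sum {N : ℕ} (s : Finset (Fin N)) (k : ℕ) (w : Fin N → ℝ) :
    ∑ i ∈ s, w i * esymWeights (s.erase i) k w
      = (k + 1) * esymWeights s (k + 1) w := by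
  unfold esymWeights
  have key : ∀ i ∈ s,
      w i * ∑ J ∈ (s.erase i).powersetCard k, ∏ j ∈ J, w j
        = ∑ I ∈ (s.powersetCard (k+1)).filter (fun I => i ∈ I), ∏ j ∈ I, w j := by
    intro i hi
    rw [Finset.mul_sum]
    refine Finset.sum_bij' (fun J _ => insert i J) (fun I _ => I.erase i) ?_ ?_ ?_ ?_ ?_
    · intro J hJ
      obtain ⟨hsub, hcard⟩ := Finset.mem_powersetCard.1 hJ
      have hiJ : i ∉ J := fun h' => Finset.notMem_erase i s (hsub h')
      simp only [Finset.mem_filter, Finset.mem_powersetCard]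
      exact ⟨⟨Finset.insert_subset hi (hsub.trans (Finset.erase_subset i s)),
        by rw [Finset.card_insert_of_notMem hiJ, hcard]⟩, Finset.mem_insert_self i J⟩
    · intro I hI
      obtain ⟨hI', hiI⟩ := Finset.mem_filter.1 hI
      obtain ⟨hsub, hcard⟩ := Finset.mem_powersetCard.1 hI'
      refine Finset.mem_powersetCard.2 ⟨Finset.erase_subset_erase i hsub, ?_⟩
      rw [Finset.card_erase_of_mem hiI, hcard]
      omega
    · intro J hJ
      have hiJ : i ∉ J := fun h' =>
        Finset.notMem_erase i s ((Finset.mem_powersetCard.1 hJ).1 h')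
      rw [Finset.erase_insert hiJ]
    · intro I hI
      rw [Finset.insert_erase (Finset.mem_filter.1 hI).2]
    · intro J hJ
      have hiJ : i ∉ J := fun h' =>
        Finset.notMem_erase i s ((Finset.mem_powersetCard.1 hJ).1 h')
      rw [Finset.prod_insert hiJ]
  rw [Finset.sum_congr rfl key]
  have swap : ∑ i ∈ s, ∑ I ∈ (s.powersetCard (k+1)).filter (fun I => i ∈ I), ∏ j ∈ I, w j
      = ∑ I ∈ s.powersetCard (k+1), ∑ i ∈ I, ∏ j ∈ I, w j := by
    simp_rw [Finset.sum_filter]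
    rw [Finset.sum_comm]
    apply Finset.sum_congr rfl
    intro I hI
    rw [Finset.sum_ite_mem, Finset.inter_eq_right.2 (Finset.mem_powersetCard.1 hI).1]
  rw [swap, Finset.mul_sum]
  apply Finset.sum_congr rfl
  intro I hI
  rw [Finset.sum_const, (Finset.mem_powersetCard.1 hI).2, nsmul_eq_mul]
  push_cast; ring

/-- For positive weights `w` and `1 ≤ k ≤ N`, the quantities
`p i = w i · e_{k-1}(w_{-i}) / e_k(w)` satisfy `∑ i, p i = k` and `0 ≤ p i ≤ 1`. -/
theorem stmt_5 (N k : ℕ) (hk : 1 ≤ k) (hkN : k ≤ N) (w : Fin N → ℝ)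
    (hw : ∀ i, 0 < w i) (p : Fin N → ℝ)
    (hp : ∀ i, p i = w i * esymWeights (Finset.univ.erase i) (k - 1) w
        / esymWeights Finset.univ k w) :
    (∑ i : Fin N, p i) = k ∧ ∀ i, 0 ≤ p i ∧ p i ≤ 1 := by
  obtain ⟨m, rfl⟩ : ∃ m, k = m + 1 := ⟨k - 1, (Nat.succ_pred_eq_of_pos hk).symm⟩
  simp only [Nat.add_sub_cancel] at hp
  have hcard : (Finset.univ : Finset (Fin N)).card = N := by simp
  have hek : 0 < esymWeights Finset.univ (m + 1) w :=
    esym_pos _ _ w hw (by rw [hcard]; exact hkN)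
  constructor
  · have := esym_sum (Finset.univ : Finset (Fin N)) m w
    calc (∑ i : Fin N, p i)
        = (∑ i : Fin N, w i * esymWeights (Finset.univ.erase i) m w)
            / esymWeights Finset.univ (m + 1) w := by
          rw [Finset.sum_div]; exact Finset.sum_congr rfl fun i _ => hp i
      _ = ((m : ℝ) + 1) * esymWeights Finset.univ (m + 1) w
            / esymWeights Finset.univ (m + 1) w := by rw [this]
      _ = ((m : ℝ) + 1) := by field_simp
      _ = ((m + 1 : ℕ) : ℝ) := by push_cast; ring
  · intro i
    have hsplit := esym_split (Finset.univ : Finset (Fin N)) m w (Finset.mem_univ i)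
    constructor
    · rw [hp i]
      apply div_nonneg _ hek.le
      exact mul_nonneg (hw i).le (esym_nonneg _ _ w hw)
    · rw [hp i, div_le_one hek]
      calc w i * esymWeights (Finset.univ.erase i) m w
          ≤ esymWeights (Finset.univ.erase i) (m + 1) w
              + w i * esymWeights (Finset.univ.erase i) m w := by
            linarith [esym_nonneg (Finset.univ.erase i) (m + 1) w hw]
        _ = esymWeights Finset.univ (m + 1) w := hsplit.symm
end

section
/- KKT characterization for entropic FTRL over the capped simplex: for R ∈ ℝ^N, η > 0, and 1 ≤ k < N, the unique maximizer of p ↦ ∑_i p_i R_i − (1/η) ∑_i p_i ln p_i over the set {p ∈ [0,1]^N : ∑_i p_i = k} is given by p_i = min(1, K·exp(η R_i)), where K > 0 is the unique constant satisfying ∑_i min(1, K·exp(η R_i)) = k. -/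
/-- The capped simplex `{p ∈ [0,1]^N : ∑ i, p i = k}`. -/
def cappedSimplex (N : ℕ) (k : ℕ) : Set (Fin N → ℝ) :=
  {p | (∀ i, 0 ≤ p i ∧ p i ≤ 1) ∧ ∑ i, p i = (k : ℝ)}

/-- The entropic FTRL objective `p ↦ ∑ i, p i R i − (1/η) ∑ i, p i ln (p i)`
(with the convention `0 ln 0 = 0`, automatic since `Real.log 0 = 0`). -/
noncomputable def ftrlObjective {N : ℕ} (R : Fin N → ℝ) (η : ℝ) (p : Fin N → ℝ) : ℝ :=
  ∑ i, p i * R i - (1 / η) * ∑ i, p i * Real.log (p i)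

/-- Gibbs inequality ingredient: `q - p ≤ q ln q - q ln p` for `p > 0`, `q ≥ 0`. -/
lemma key_ineq {p q : ℝ} (hp : 0 < p) (hq : 0 ≤ q) :
    q - p ≤ q * Real.log q - q * Real.log p := by
  rcases eq_or_lt_of_le hq with h | h
  · simp [← h]; linarith
  · have h1 : Real.log (p / q) ≤ p / q - 1 := Real.log_le_sub_one_of_pos (by positivity)
    have h2 : Real.log (p / q) = Real.log p - Real.log q :=
      Real.log_div (ne_of_gt hp) (ne_of_gt h)
    have h3 := mul_le_mul_of_nonneg_left h1 h.le
    rw [h2] at h3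
    have h4 : q * (p / q - 1) = p - q := by field_simp
    nlinarith

/-- Strict version of `key_ineq` when `q ≠ p`. -/
lemma key_strict {p q : ℝ} (hp : 0 < p) (hq : 0 ≤ q) (hne : q ≠ p) :
    q - p < q * Real.log q - q * Real.log p := by
  rcases eq_or_lt_of_le hq with h | h
  · simp [← h]; linarith [hp]
  · have hne1 : p / q ≠ 1 := by
      intro habs
      exact hne (by field_simp at habs; linarith)
    have h1 : Real.log (p / q) < p / q - 1 :=
      Real.log_lt_sub_one_of_pos (by positivity) hne1
    have h2 : Real.log (p / q) = Real.log p - Real.log q :=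
      Real.log_div (ne_of_gt hp) (ne_of_gt h)
    have h3 := mul_lt_mul_of_pos_left h1 h
    rw [h2] at h3
    have h4 : q * (p / q - 1) = p - q := by field_simp
    nlinarith

/-- Pointwise concavity (first-order) bound for the coordinate objective. -/
lemma pointwise_le {R η p q : ℝ} (hη : 0 < η) (hp : 0 < p) (hq : 0 ≤ q) :
    q * R - (1 / η) * (q * Real.log q) ≤
      p * R - (1 / η) * (p * Real.log p) +
        (R - (1 / η) * (Real.log p + 1)) * (q - p) := by
  have h := key_ineq hp hq
  have h2 : (0 : ℝ) < 1 / η := by positivity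
  nlinarith [mul_nonneg h2.le (sub_nonneg.mpr h)]

/-- Strict pointwise bound when `q ≠ p`. -/
lemma pointwise_lt {R η p q : ℝ} (hη : 0 < η) (hp : 0 < p) (hq : 0 ≤ q) (hne : q ≠ p) :
    q * R - (1 / η) * (q * Real.log q) <
      p * R - (1 / η) * (p * Real.log p) +
        (R - (1 / η) * (Real.log p + 1)) * (q - p) := by
  have h := key_strict hp hq hne
  have h2 : (0 : ℝ) < 1 / η := by positivity
  nlinarith [mul_pos h2 (sub_pos.mpr h)]

/-- Main auxiliary lemma: the FTRL value at `q` is at most that at `p`, strictly if `q ≠ p`. -/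
lemma ftrl_main (N k : ℕ) (R : Fin N → ℝ) (η : ℝ) (hη : 0 < η)
    (K : ℝ) (hK : 0 < K)
    (p : Fin N → ℝ) (hp : ∀ i, p i = min 1 (K * Real.exp (η * R i)))
    (hpsum : ∑ i, p i = (k : ℝ))
    (q : Fin N → ℝ) (hq01 : ∀ i, 0 ≤ q i ∧ q i ≤ 1) (hqsum : ∑ i, q i = (k : ℝ)) :
    ftrlObjective R η q ≤ ftrlObjective R η p ∧
      (q ≠ p → ftrlObjective R η q < ftrlObjective R η p) := by
  have hppos : ∀ i, 0 < p i := fun i => by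
    rw [hp i]; exact lt_min one_pos (by positivity)
  have hple : ∀ i, p i ≤ 1 := fun i => by rw [hp i]; exact min_le_left _ _
  set g : Fin N → ℝ := fun i => R i - (1 / η) * (Real.log (p i) + 1) with hg
  set μ : ℝ := -(Real.log K + 1) / η with hμ
  have hgμ : ∀ i, (g i - μ) * (q i - p i) ≤ 0 := by
    intro i
    rcases le_total (K * Real.exp (η * R i)) 1 with hc | hc
    · have hpe : p i = K * Real.exp (η * R i) := by rw [hp i, min_eq_right hc]
      have hlog : Real.log (p i) = Real.log K + η * R i := by
        rw [hpe, Real.log_mul (ne_of_gt hK) (ne_of_gt (Real.exp_pos _)), Real.log_exp]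
      have : g i = μ := by
        simp only [hg, hμ, hlog]; field_simp; ring
      rw [this]; simp
    · have hpe : p i = 1 := by rw [hp i, min_eq_left hc]
      have hlogK : 0 ≤ Real.log K + η * R i := by
        have : 0 ≤ Real.log (K * Real.exp (η * R i)) := Real.log_nonneg hc
        rwa [Real.log_mul (ne_of_gt hK) (ne_of_gt (Real.exp_pos _)), Real.log_exp] at this
      have hge : μ ≤ g i := by
        simp only [hg, hμ, hpe, Real.log_one]
        rw [div_le_iff₀ hη] at *
        have : (R i - 1 / η * (0 + 1)) * η = η * R i - 1 := by field_simp; ring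
        rw [this]
        linarith
      have hqp : q i - p i ≤ 0 := by rw [hpe]; linarith [(hq01 i).2]
      exact mul_nonpos_of_nonneg_of_nonpos (by linarith) hqp
  have hsum0 : ∑ i, g i * (q i - p i) ≤ 0 := by
    have h1 : ∑ i, g i * (q i - p i) ≤ ∑ i, μ * (q i - p i) := by
      apply Finset.sum_le_sum
      intro i _
      nlinarith [hgμ i]
    have h2 : ∑ i, μ * (q i - p i) = 0 := by
      rw [← Finset.mul_sum, Finset.sum_sub_distrib, hqsum, hpsum]
      ring
    linarith
  have e1 : ftrlObjective R η q = ∑ i, (q i * R i - (1/η) * (q i * Real.log (q i))) := by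
    rw [ftrlObjective, Finset.sum_sub_distrib, Finset.mul_sum]
  have e2 : ftrlObjective R η p = ∑ i, (p i * R i - (1/η) * (p i * Real.log (p i))) := by
    rw [ftrlObjective, Finset.sum_sub_distrib, Finset.mul_sum]
  constructor
  · have hmain : ∑ i, (q i * R i - (1/η) * (q i * Real.log (q i))) ≤
        ∑ i, (p i * R i - (1/η) * (p i * Real.log (p i)) + g i * (q i - p i)) :=
      Finset.sum_le_sum fun i _ => pointwise_le hη (hppos i) (hq01 i).1
    rw [Finset.sum_add_distrib] at hmain
    rw [e1, e2]
    linarith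
  · intro hne
    obtain ⟨j, hj⟩ : ∃ j, q j ≠ p j := by
      by_contra hco
      push_neg at hco
      exact hne (funext hco)
    have hmain : ∑ i, (q i * R i - (1/η) * (q i * Real.log (q i))) <
        ∑ i, (p i * R i - (1/η) * (p i * Real.log (p i)) + g i * (q i - p i)) := by
      apply Finset.sum_lt_sum
      · exact fun i _ => pointwise_le hη (hppos i) (hq01 i).1
      · exact ⟨j, Finset.mem_univ j, pointwise_lt hη (hppos j) (hq01 j).1 hj⟩
    rw [Finset.sum_add_distrib] at hmain
    rw [e1, e2]
    linarith

/-- KKT characterization for entropic FTRL over the capped simplex: for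
`R ∈ ℝ^N`, `η > 0`, `1 ≤ k < N`, and `K > 0` the constant satisfying
`∑ i, min(1, K e^{η R i}) = k`, the point `p i = min(1, K e^{η R i})` lies in the capped
simplex and is the unique maximizer of the objective over it. -/
theorem stmt_14 (N k : ℕ) (hk : 1 ≤ k) (hkN : k < N) (R : Fin N → ℝ) (η : ℝ) (hη : 0 < η)
    (K : ℝ) (hK : 0 < K)
    (hKsum : ∑ i : Fin N, min 1 (K * Real.exp (η * R i)) = k)
    (p : Fin N → ℝ) (hp : ∀ i, p i = min 1 (K * Real.exp (η * R i))) :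
    p ∈ cappedSimplex N k ∧
      (∀ q ∈ cappedSimplex N k, ftrlObjective R η q ≤ ftrlObjective R η p) ∧
      (∀ q ∈ cappedSimplex N k, ftrlObjective R η q = ftrlObjective R η p → q = p) := by
  have hppos : ∀ i, 0 < p i := fun i => by
    rw [hp i]; exact lt_min one_pos (by positivity)
  have hple : ∀ i, p i ≤ 1 := fun i => by rw [hp i]; exact min_le_left _ _
  have hpsum : ∑ i, p i = (k : ℝ) := by
    rw [Finset.sum_congr rfl fun i _ => hp i]; exact hKsum
  refine ⟨⟨fun i => ⟨(hppos i).le, hple i⟩, hpsum⟩, ?_, ?_⟩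
  · intro q hq
    obtain ⟨hq01, hqsum⟩ := hq
    exact (ftrl_main N k R η hη K hK p hp hpsum q hq01 hqsum).1
  · intro q hq heq
    obtain ⟨hq01, hqsum⟩ := hq
    by_contra hne
    exact absurd heq
      (ne_of_lt ((ftrl_main N k R η hη K hK p hp hpsum q hq01 hqsum).2 hne))
end

section
/- Normal CDF upper bound: for every u > 0, the standard normal CDF satisfies Φ(u) ≤ 1 − u·e^{−2u²}/√(2π). -/
open MeasureTheory

/-- The standard normal cumulative distribution function
`Φ(u) = (1/√(2π)) ∫_{-∞}^u e^{-x²/2} dx`. -/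
noncomputable def stdNormalCDF (u : ℝ) : ℝ :=
  (Real.sqrt (2 * Real.pi))⁻¹ * ∫ x in Set.Iic u, Real.exp (-x ^ 2 / 2)

/-- For every `u > 0`, `Φ(u) ≤ 1 − u e^{−2u²} / √(2π)`. -/
theorem stmt_15 (u : ℝ) (hu : 0 < u) :
    stdNormalCDF u ≤ 1 - u * Real.exp (-2 * u ^ 2) / Real.sqrt (2 * Real.pi) := by
  have hg : Integrable (fun x : ℝ => Real.exp (-x ^ 2 / 2)) := by
    have := integrable_exp_neg_mul_sq (by norm_num : (0:ℝ) < 1/2)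
    convert this using 2 with x
    ring_nf
  have hsqrt : 0 < Real.sqrt (2 * Real.pi) :=
    Real.sqrt_pos.2 (by positivity)
  have htot : (∫ x : ℝ, Real.exp (-x ^ 2 / 2)) = Real.sqrt (2 * Real.pi) := by
    have h := integral_gaussian (1/2 : ℝ)
    rw [show (fun x : ℝ => Real.exp (-x ^ 2 / 2)) = fun x : ℝ => Real.exp (-(1/2) * x ^ 2) by
      funext x; ring_nf]
    rw [h]; norm_num [mul_comm]
  have hsplit : (∫ x in Set.Iic u, Real.exp (-x ^ 2 / 2))
      + ∫ x in Set.Ioi u, Real.exp (-x ^ 2 / 2) = Real.sqrt (2 * Real.pi) := by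
    rw [← htot]; exact intervalIntegral.integral_Iic_add_Ioi hg.integrableOn hg.integrableOn
  have htail : u * Real.exp (-2 * u ^ 2) ≤ ∫ x in Set.Ioi u, Real.exp (-x ^ 2 / 2) := by
    have h2 : u * Real.exp (-2 * u ^ 2)
        ≤ ∫ x in Set.Ioc u (2 * u), Real.exp (-x ^ 2 / 2) := by
      have := setIntegral_ge_of_const_le (c := Real.exp (-2 * u ^ 2))
        (s := Set.Ioc u (2 * u)) measurableSet_Ioc
        (by simp [Real.volume_Ioc])
        (fun x hx => by
          apply Real.exp_le_exp.2
          have h1 : x ≤ 2 * u := hx.2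
          have h0 : 0 < x := lt_trans hu hx.1
          nlinarith [sq_nonneg x]) hg.integrableOn
      calc u * Real.exp (-2 * u ^ 2)
          = Real.exp (-2 * u ^ 2) * (volume (Set.Ioc u (2 * u))).toReal := by
            rw [Real.volume_Ioc, ENNReal.toReal_ofReal (by linarith)]; ring_nf
        _ ≤ _ := by rw [smul_eq_mul, mul_comm] at this; exact this
    refine h2.trans (setIntegral_mono_set hg.integrableOn ?_ ?_)
    · filter_upwards with x using Real.exp_nonneg _
    · exact Filter.Eventually.of_forall Set.Ioc_subset_Ioi_self
  have hIic : (∫ x in Set.Iic u, Real.exp (-x ^ 2 / 2))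
      ≤ Real.sqrt (2 * Real.pi) - u * Real.exp (-2 * u ^ 2) := by linarith
  unfold stdNormalCDF
  rw [div_eq_inv_mul]
  calc (Real.sqrt (2 * Real.pi))⁻¹ * ∫ x in Set.Iic u, Real.exp (-x ^ 2 / 2)
      ≤ (Real.sqrt (2 * Real.pi))⁻¹ * (Real.sqrt (2 * Real.pi) - u * Real.exp (-2 * u ^ 2)) :=
        mul_le_mul_of_nonneg_left hIic (by positivity)
    _ = 1 - (Real.sqrt (2 * Real.pi))⁻¹ * (u * Real.exp (-2 * u ^ 2)) := by
        field_simp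
end
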